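/- Let Y be a real normed space whose dual norm is strictly convex. Then every closed subspace X of Y has property U in Y, i.e., every continuous linear functional on X has a unique norm-preserving extension to Y. -/

import Mathlib

/-- If the dual norm of a real normed space `Y` is strictly convex, then every closed
subspace `X` of `Y` has property U in `Y`: every continuous linear functional on `X`
has a unique norm-preserving extension to `Y`. -/
theorem propertyU_of_strictConvex_dual (Y : Type*) [NormedAddCommGroup Y] [NormedSpace ℝ Y]
    [StrictConvexSpace ℝ (StrongDual ℝ Y)]
    (X : Subspace ℝ Y) (hX : IsClosed (X : Set Y)) (f : X →L[ℝ] ℝ) :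
    ∃! g : Y →L[ℝ] ℝ, (∀ x : X, g x = f x) ∧ ‖g‖ = ‖f‖ := by
  obtain ⟨g, hg, hgn⟩ := exists_extension_norm_eq X f
  refine ⟨g, ⟨hg, hgn⟩, ?_⟩
  rintro g' ⟨hg', hg'n⟩
  -- norm of sum
  have hsum_le : ‖g' + g‖ ≤ ‖f‖ + ‖f‖ := by
    calc ‖g' + g‖ ≤ ‖g'‖ + ‖g‖ := norm_add_le _ _
    _ = ‖f‖ + ‖f‖ := by rw [hg'n, hgn]
  have hle : ‖f‖ + ‖f‖ ≤ ‖g' + g‖ := by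
    have h2 : ‖f‖ ≤ ‖g' + g‖ / 2 := by
      apply ContinuousLinearMap.opNorm_le_bound _ (by positivity)
      intro x
      have hx : f x = ((g' + g) (x : Y)) / 2 := by
        simp [hg' x, hg x]
      rw [hx]
      have := (g' + g).le_opNorm (x : Y)
      have hnx : ‖(x : Y)‖ = ‖x‖ := rfl
      rw [Real.norm_eq_abs, abs_div, abs_two]
      rw [Real.norm_eq_abs, hnx] at this
      linarith [abs_nonneg ((g' + g) (x : Y)), norm_nonneg x]
    linarith
  have hne : ‖g' + g‖ = ‖g'‖ + ‖g‖ := by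
    rw [hg'n, hgn]; exact le_antisymm hsum_le hle
  exact eq_of_norm_eq_of_norm_add_eq (hg'n.trans hgn.symm) hne
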